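/- arXiv:1101.5709 — 2 statements merged into one kernel-verified Lean document; each statement's English description precedes it below -/
import Mathlib

section
/- Every permutation of {1,...,n} is a product of transpositions, and consequently for any singular transformation a = e∘g (with e idempotent, g a permutation), a can be written as e composed with a product of idempotents of rank equal to rank(a). -/
/-- The full transformation monoid on `{1,...,n}`, modeled as `Function.End (Fin n)`
(multiplication is composition). -/
abbrev Tn (n : ℕ) := Function.End (Fin n)

/-- A permutation viewed as a transformation. -/
def ofPerm {n : ℕ} (g : Equiv.Perm (Fin n)) : Tn n := ⇑g

/-- The rank of a transformation: the size of its image. -/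
def rnk {n : ℕ} (a : Tn n) : ℕ := (Finset.univ.image a).card

/-- The symmetric group embedded in `Tn n` as a set. -/
def perms (n : ℕ) : Set (Tn n) := Set.range (fun g : Equiv.Perm (Fin n) => ofPerm g)

/-- The `S_n`-conjugacy class of a transformation. -/
def conjClass {n : ℕ} (t : Tn n) : Set (Tn n) :=
  {s | ∃ g : Equiv.Perm (Fin n), s = ofPerm g⁻¹ * t * ofPerm g}

namespace Aux17
variable {n : ℕ}

lemma mul_apply (f g : Tn n) (w : Fin n) : (f * g) w = f (g w) := rfl

def retr (K : Finset (Fin n)) (u p q : Fin n) : Tn n :=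
  fun w => if w ∈ K then w else if w = u then p else q

lemma retr_mem {K : Finset (Fin n)} {u p q : Fin n} (hp : p ∈ K) (hq : q ∈ K) (w : Fin n) :
    retr K u p q w ∈ K := by
  unfold retr; split_ifs <;> assumption

lemma retr_fix {K : Finset (Fin n)} {u p q : Fin n} {w : Fin n} (hw : w ∈ K) :
    retr K u p q w = w := by simp [retr, hw]

lemma retr_out {K : Finset (Fin n)} {u p q : Fin n} (hu : u ∉ K) :
    retr K u p q u = p := by simp [retr, hu]

lemma retr_idem {K : Finset (Fin n)} {u p q : Fin n} (hp : p ∈ K) (hq : q ∈ K) :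
    retr K u p q * retr K u p q = retr K u p q := by
  funext w
  rw [mul_apply, retr_fix (retr_mem hp hq w)]

lemma rnk_retr {K : Finset (Fin n)} {u p q : Fin n} (hp : p ∈ K) (hq : q ∈ K) :
    rnk (retr K u p q) = K.card := by
  unfold rnk
  congr 1
  apply Finset.Subset.antisymm
  · intro w hw
    replace hw := Finset.mem_image.1 hw
    obtain ⟨v, -, rfl⟩ := hw
    exact retr_mem hp hq v
  · intro w hw
    refine Finset.mem_image.2 ?_
    exact ⟨w, Finset.mem_univ w, retr_fix hw⟩

lemma rnk_perm_mul (g : Equiv.Perm (Fin n)) (c : Tn n) : rnk (ofPerm g * c) = rnk c := by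
  unfold rnk
  have : Finset.univ.image (ofPerm g * c) = (Finset.univ.image c).image ⇑g := by
    exact Finset.image_image.symm
  rw [this, Finset.card_image_of_injective _ g.injective]

/-- One-in-image case. -/
lemma swap_step_one (x y : Fin n) (hxy : x ≠ y) (c : Tn n)
    (hx : x ∈ Finset.univ.image c) (hy : y ∉ Finset.univ.image c) :
    ∃ N : List (Tn n), (∀ f ∈ N, f * f = f ∧ rnk f = rnk c) ∧
      ofPerm (Equiv.swap x y) * c = N.prod * c := by
  set I : Finset (Fin n) := Finset.univ.image c with hI
  have hmem : ∀ w, c w ∈ I := fun w => Finset.mem_image_of_mem c (Finset.mem_univ w)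
  set K : Finset (Fin n) := insert y (I.erase x) with hK
  have hyK : y ∈ K := Finset.mem_insert_self _ _
  have hxK : x ∉ K := by
    rw [hK]
    simp [Finset.mem_insert, Finset.mem_erase, hxy]
  have cardK : K.card = I.card := by
    have h0 : 0 < I.card := Finset.card_pos.2 ⟨x, hx⟩
    rw [hK, Finset.card_insert_of_notMem (fun h => hy (Finset.mem_of_mem_erase h)),
      Finset.card_erase_of_mem hx]
    omega
  refine ⟨[retr K x y y], ?_, ?_⟩
  · intro f hf
    simp only [List.mem_cons, List.not_mem_nil, or_false] at hf
    subst hf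
    exact ⟨retr_idem hyK hyK, by rw [rnk_retr hyK hyK, cardK]; rfl⟩
  · funext w
    simp only [List.prod_cons, List.prod_nil, mul_one]
    show Equiv.swap x y (c w) = retr K x y y (c w)
    have hcw := hmem w
    by_cases h1 : c w = x
    · rw [h1, Equiv.swap_apply_left, retr_out hxK]
    · have h2 : c w ≠ y := fun h => hy (h ▸ hcw)
      rw [Equiv.swap_apply_of_ne_of_ne h1 h2,
        retr_fix (Finset.mem_insert_of_mem (Finset.mem_erase.2 ⟨h1, hcw⟩))]

lemma swap_step (x y : Fin n) (hxy : x ≠ y) (c : Tn n) (hc : rnk c < n) :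
    ∃ N : List (Tn n), (∀ f ∈ N, f * f = f ∧ rnk f = rnk c) ∧
      ofPerm (Equiv.swap x y) * c = N.prod * c := by
  set I : Finset (Fin n) := Finset.univ.image c with hI
  have hmem : ∀ w, c w ∈ I := fun w => Finset.mem_image_of_mem c (Finset.mem_univ w)
  have hcard : I.card < n := hc
  by_cases hx : x ∈ I <;> by_cases hy : y ∈ I
  · -- both in I; pick z ∉ I
    have hzex : ∃ z, z ∉ I := by
      by_contra h
      push_neg at h
      have huniv : I = Finset.univ := Finset.eq_univ_iff_forall.2 h
      rw [huniv, Finset.card_univ, Fintype.card_fin] at hcard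
      omega
    obtain ⟨z, hz⟩ := hzex
    have hxz : x ≠ z := fun h => hz (h ▸ hx)
    have hyz : y ≠ z := fun h => hz (h ▸ hy)
    set K1 : Finset (Fin n) := insert z (I.erase y) with hK1
    set K2 : Finset (Fin n) := insert z (I.erase x) with hK2
    have hzK1 : z ∈ K1 := Finset.mem_insert_self _ _
    have hzK2 : z ∈ K2 := Finset.mem_insert_self _ _
    have hxK1 : x ∈ K1 := Finset.mem_insert_of_mem (Finset.mem_erase.2 ⟨hxy, hx⟩)
    have hyK2 : y ∈ K2 := Finset.mem_insert_of_mem (Finset.mem_erase.2 ⟨Ne.symm hxy, hy⟩)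
    have hyK1 : y ∉ K1 := by
      rw [hK1]; simp [Finset.mem_insert, Finset.mem_erase, hyz]
    have hxK2 : x ∉ K2 := by
      rw [hK2]; simp [Finset.mem_insert, Finset.mem_erase, hxz]
    have hzI : z ∉ I := hz
    have h0 : 0 < I.card := Finset.card_pos.2 ⟨x, hx⟩
    have cardK1 : K1.card = I.card := by
      rw [hK1, Finset.card_insert_of_notMem (fun h => hz (Finset.mem_of_mem_erase h)),
        Finset.card_erase_of_mem hy]
      omega
    have cardK2 : K2.card = I.card := by
      rw [hK2, Finset.card_insert_of_notMem (fun h => hz (Finset.mem_of_mem_erase h)),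
        Finset.card_erase_of_mem hx]
      omega
    refine ⟨[retr I z x x, retr K2 x y y, retr K1 y z x], ?_, ?_⟩
    · intro f hf
      simp only [List.mem_cons, List.not_mem_nil, or_false] at hf
      rcases hf with rfl | rfl | rfl
      · exact ⟨retr_idem hx hx, by rw [rnk_retr hx hx]; rfl⟩
      · exact ⟨retr_idem hyK2 hyK2, by rw [rnk_retr hyK2 hyK2, cardK2]; rfl⟩
      · exact ⟨retr_idem hzK1 hxK1, by rw [rnk_retr hzK1 hxK1, cardK1]; rfl⟩
    · funext w
      simp only [List.prod_cons, List.prod_nil, mul_one]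
      show Equiv.swap x y (c w) =
        retr I z x x (retr K2 x y y (retr K1 y z x (c w)))
      have hcw := hmem w
      by_cases h1 : c w = x
      · rw [h1, Equiv.swap_apply_left, retr_fix hxK1, retr_out hxK2, retr_fix hy]
      · by_cases h2 : c w = y
        · rw [h2, Equiv.swap_apply_right, retr_out hyK1, retr_fix hzK2, retr_out hzI]
        · rw [Equiv.swap_apply_of_ne_of_ne h1 h2]
          have m1 : c w ∈ K1 := Finset.mem_insert_of_mem (Finset.mem_erase.2 ⟨h2, hcw⟩)
          have m2 : c w ∈ K2 := Finset.mem_insert_of_mem (Finset.mem_erase.2 ⟨h1, hcw⟩)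
          rw [retr_fix m1, retr_fix m2, retr_fix hcw]
  · exact swap_step_one x y hxy c hx hy
  · rw [Equiv.swap_comm]
    exact swap_step_one y x (Ne.symm hxy) c hy hx
  · refine ⟨[], fun f hf => absurd hf List.not_mem_nil, ?_⟩
    funext w
    simp only [List.prod_nil, one_mul]
    show Equiv.swap x y (c w) = c w
    exact Equiv.swap_apply_of_ne_of_ne (fun h => hx (h ▸ hmem w)) (fun h => hy (h ▸ hmem w))

lemma list_step (b : Tn n) (hb : rnk b < n) :
    ∀ L : List (Fin n × Fin n), (∀ p ∈ L, p.1 ≠ p.2) →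
      ∃ M : List (Tn n), (∀ x ∈ M, x * x = x ∧ rnk x = rnk b) ∧
        ofPerm (L.map (fun p => Equiv.swap p.1 p.2)).prod * b = M.prod * b := by
  intro L
  induction L with
  | nil =>
    intro _
    exact ⟨[], fun f hf => absurd hf List.not_mem_nil, rfl⟩
  | cons p L ih =>
    intro hne
    obtain ⟨M, hM, hMe⟩ := ih (fun q hq => hne q (List.mem_cons_of_mem p hq))
    have hrb' : rnk (ofPerm (L.map (fun p => Equiv.swap p.1 p.2)).prod * b) = rnk b :=
      rnk_perm_mul _ b
    have hb' : rnk (ofPerm (L.map (fun p => Equiv.swap p.1 p.2)).prod * b) < n := by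
      rw [hrb']; exact hb
    obtain ⟨N, hN, hNe⟩ :=
      swap_step p.1 p.2 (hne p List.mem_cons_self)
        (ofPerm (L.map (fun q => Equiv.swap q.1 q.2)).prod * b) hb'
    refine ⟨N ++ M, ?_, ?_⟩
    · intro f hf
      rcases List.mem_append.1 hf with h | h
      · obtain ⟨h1, h2⟩ := hN f h
        exact ⟨h1, by rw [h2, hrb']⟩
      · exact hM f h
    · have key : ofPerm ((p :: L).map (fun q => Equiv.swap q.1 q.2)).prod * b =
          ofPerm (Equiv.swap p.1 p.2) * (ofPerm (L.map (fun q => Equiv.swap q.1 q.2)).prod * b) := by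
        simp only [List.map_cons, List.prod_cons]
        rfl
      rw [key, hNe, hMe, List.prod_append, mul_assoc, ← hMe]

lemma rnk_le (a : Tn n) : rnk a ≤ n := by
  have := Finset.card_image_le (s := (Finset.univ : Finset (Fin n))) (f := a)
  simpa [rnk] using this

lemma rnk_lt (a : Tn n) (h : ¬ Function.Bijective a) : rnk a < n := by
  rcases lt_or_eq_of_le (rnk_le a) with h' | h'
  · exact h'
  · exfalso
    apply h
    refine (Fintype.bijective_iff_surjective_and_card (a : Fin n → Fin n)).2 ?_
    refine ⟨fun v => ?_, rfl⟩
    have h'' : (Finset.univ.image a).card = n := h'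
    have huniv : Finset.univ.image a = Finset.univ := by
      apply Finset.eq_univ_of_card
      rw [h'', Fintype.card_fin]
    have hv : v ∈ Finset.univ.image a := by rw [huniv]; exact Finset.mem_univ v
    obtain ⟨u, -, hu⟩ := Finset.mem_image.1 hv
    exact ⟨u, hu⟩

end Aux17

/-- Every permutation is a product of transpositions, and consequently every singular
`a = e∘g` is `e` followed by a product of idempotents of rank `rank a`. -/
theorem stmt17 (n : ℕ) :
    (∀ g : Equiv.Perm (Fin n), ∃ L : List (Fin n × Fin n), (∀ p ∈ L, p.1 ≠ p.2) ∧
      g = (L.map (fun p => Equiv.swap p.1 p.2)).prod) ∧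
    (∀ (a e : Tn n) (g : Equiv.Perm (Fin n)), ¬ Function.Bijective a → e * e = e →
      a = ofPerm g * e →
      ∃ L : List (Tn n), (∀ x ∈ L, x * x = x ∧ rnk x = rnk a) ∧ a = L.prod * e) := by
  have part1 : ∀ g : Equiv.Perm (Fin n), ∃ L : List (Fin n × Fin n),
      (∀ p ∈ L, p.1 ≠ p.2) ∧ g = (L.map (fun p => Equiv.swap p.1 p.2)).prod := by
    intro g
    induction g using Equiv.Perm.swap_induction_on
    case _ => exact ⟨[], fun p hp => absurd hp List.not_mem_nil, rfl⟩
    case _ f x y hxy ih =>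
      obtain ⟨L, hL, hLe⟩ := ih
      refine ⟨(x, y) :: L, ?_, ?_⟩
      · intro p hp
        rcases List.mem_cons.1 hp with rfl | hp
        · exact hxy
        · exact hL p hp
      · simp only [List.map_cons, List.prod_cons, ← hLe]
  refine ⟨part1, ?_⟩
  intro a e g hbij he hae
  have hra : rnk a < n := Aux17.rnk_lt a hbij
  have hrae : rnk a = rnk e := by rw [hae, Aux17.rnk_perm_mul]
  have hre : rnk e < n := hrae ▸ hra
  obtain ⟨L0, hL0ne, hL0⟩ := part1 g
  obtain ⟨M, hM, hMe⟩ := Aux17.list_step e hre L0 hL0ne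
  refine ⟨M, ?_, ?_⟩
  · intro x hx
    obtain ⟨h1, h2⟩ := hM x hx
    exact ⟨h1, by rw [h2, hrae]⟩
  · rw [hae, hL0, hMe]
end

section
/- The set of non-invertible elements of the subsemigroup of T_n generated by a singular transformation a together with all permutations is exactly the set of all transformations of rank at most rank(a) that can be written as products of S_n-conjugates of a; in particular this set is closed under conjugation by S_n. -/
namespace LM
variable {n : ℕ}

lemma mul_apply (f g : Tn n) (x : Fin n) : (f * g) x = f (g x) := rfl

lemma ofPerm_apply (g : Equiv.Perm (Fin n)) (x : Fin n) : (ofPerm g) x = g x := rfl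

lemma ofPerm_mul (g h : Equiv.Perm (Fin n)) : ofPerm (g * h) = ofPerm g * ofPerm h := rfl

lemma ofPerm_one : (ofPerm (1 : Equiv.Perm (Fin n))) = (1 : Tn n) := rfl

/-- the image of a transformation as a finset -/
def img (a : Tn n) : Finset (Fin n) := Finset.univ.image a

lemma rnk_eq_card_img (a : Tn n) : rnk a = (img a).card := rfl

lemma mem_img {a : Tn n} {y : Fin n} : y ∈ img a ↔ ∃ x, a x = y := by
  simp [img]
  exact ⟨fun h => by obtain ⟨x, _, hx⟩ := Finset.mem_image.1 h; exact ⟨x, hx⟩,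
    fun ⟨x, hx⟩ => Finset.mem_image.2 ⟨x, Finset.mem_univ _, hx⟩⟩

lemma apply_mem_img (a : Tn n) (x : Fin n) : a x ∈ img a := mem_img.2 ⟨x, rfl⟩

/-- conjugation as an element of Tn -/
lemma conj_apply (g : Equiv.Perm (Fin n)) (t : Tn n) (x : Fin n) :
    (ofPerm g⁻¹ * t * ofPerm g) x = g⁻¹ (t (g x)) := rfl

lemma rnk_mul_le_left (f g : Tn n) : rnk (f * g) ≤ rnk f := by
  apply Finset.card_le_card
  intro y hy
  rcases mem_img.1 hy with ⟨x, hx⟩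
  exact mem_img.2 ⟨g x, hx⟩

lemma img_conj (g : Equiv.Perm (Fin n)) (t : Tn n) :
    img (ofPerm g⁻¹ * t * ofPerm g) = (img t).image ⇑(g⁻¹) := by
  ext y
  simp only [mem_img, Finset.mem_image]
  constructor
  · rintro ⟨x, hx⟩
    exact ⟨t (g x), ⟨g x, rfl⟩, hx⟩
  · rintro ⟨z, hz, hzy⟩
    rcases hz with ⟨x, hx⟩
    exact ⟨g⁻¹ x, by simp [conj_apply, hx, hzy]⟩

lemma rnk_conj (g : Equiv.Perm (Fin n)) (t : Tn n) :
    rnk (ofPerm g⁻¹ * t * ofPerm g) = rnk t := by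
  rw [rnk_eq_card_img, rnk_eq_card_img, img_conj,
    Finset.card_image_of_injective _ (Equiv.injective _)]

lemma rnk_le (a : Tn n) : rnk a ≤ n := by
  rw [rnk_eq_card_img]
  simpa using Finset.card_le_card (Finset.subset_univ (img a))

lemma bijective_of_rnk_eq (a : Tn n) (h : rnk a = n) : Function.Bijective a := by
  have himg : img a = Finset.univ := by
    apply Finset.eq_univ_of_card
    simpa [rnk_eq_card_img] using h
  have hsurj : Function.Surjective a := by
    intro y
    have : y ∈ img a := himg ▸ Finset.mem_univ y
    exact mem_img.1 this
  exact (Finite.surjective_iff_bijective).1 hsurj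

lemma rnk_lt (a : Tn n) (ha : ¬ Function.Bijective a) : rnk a < n := by
  rcases lt_or_eq_of_le (rnk_le a) with h | h
  · exact h
  · exact absurd (bijective_of_rnk_eq a h) ha

lemma rnk_ofPerm (g : Equiv.Perm (Fin n)) : rnk (ofPerm g) = n := by
  have : img (ofPerm g) = Finset.univ := by
    apply Finset.eq_univ_of_forall
    intro y
    exact mem_img.2 ⟨g⁻¹ y, by simp [ofPerm_apply]⟩
  simpa [rnk_eq_card_img, this] using rfl

lemma not_mem_perms_of_rnk_lt {t : Tn n} (h : rnk t < n) : t ∉ perms n := by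
  rintro ⟨g, rfl⟩
  simp [rnk_ofPerm] at h

section Ext
variable {n : ℕ}

open Finset

/-- Any injective-on-S map extends to a permutation. -/
lemma exists_perm_extend (S : Finset (Fin n)) (f : Fin n → Fin n)
    (hinj : Set.InjOn f S) :
    ∃ δ : Equiv.Perm (Fin n), ∀ x ∈ S, δ x = f x := by
  classical
  set T := S.image f with hT
  have hcard : T.card = S.card := Finset.card_image_of_injOn hinj
  have hcc : (Sᶜ : Finset (Fin n)).card = (Tᶜ : Finset (Fin n)).card := by
    simp [Finset.card_compl, hcard]
  let e : {x // x ∈ (Sᶜ : Finset (Fin n))} ≃ {x // x ∈ (Tᶜ : Finset (Fin n))} :=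
    Finset.equivOfCardEq hcc
  set g : Fin n → Fin n := fun x =>
    if hx : x ∈ S then f x else (e ⟨x, by simp [hx]⟩ : _) with hg
  have hgS : ∀ x ∈ S, g x = f x := fun x hx => by simp [hg, hx]
  have hgmemT : ∀ x ∈ S, g x ∈ T := fun x hx => by
    rw [hgS x hx]; exact Finset.mem_image_of_mem f hx
  have hgmemTc : ∀ (x) (hx : x ∉ S), g x ∉ T := by
    intro x hx
    have hgx : g x = (e ⟨x, by simp [hx]⟩ : _) := by simp [hg, hx]
    rw [hgx]
    exact Finset.mem_compl.1 (e ⟨x, by simp [hx]⟩).property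
  have hginj : Function.Injective g := by
    intro x y hxy
    by_cases hx : x ∈ S <;> by_cases hy : y ∈ S
    · exact hinj hx hy (by rwa [hgS x hx, hgS y hy] at hxy)
    · exact absurd (hxy ▸ hgmemT x hx) (hgmemTc y hy)
    · exact absurd (hxy ▸ hgmemTc x hx) (by simp [hgmemT y hy])
    · have hx' : g x = (e ⟨x, by simp [hx]⟩ : _) := by simp [hg, hx]
      have hy' : g y = (e ⟨y, by simp [hy]⟩ : _) := by simp [hg, hy]
      have : e ⟨x, by simp [hx]⟩ = e ⟨y, by simp [hy]⟩ :=
        Subtype.ext (by rw [← hx', ← hy', hxy])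
      simpa using congrArg Subtype.val (e.injective this)
  refine ⟨Equiv.ofBijective g (Finite.injective_iff_bijective.1 hginj), ?_⟩
  intro x hx
  simpa [Equiv.ofBijective] using hgS x hx

/-- A permutation mapping three pairwise disjoint finsets into prescribed
pairwise disjoint finsets of matching cardinalities. -/
lemma exists_perm_pieces (A₁ A₂ A₃ B₁ B₂ B₃ : Finset (Fin n))
    (hA12 : Disjoint A₁ A₂) (hA13 : Disjoint A₁ A₃) (hA23 : Disjoint A₂ A₃)
    (hB12 : Disjoint B₁ B₂) (hB13 : Disjoint B₁ B₃) (hB23 : Disjoint B₂ B₃)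
    (h1 : A₁.card = B₁.card) (h2 : A₂.card = B₂.card) (h3 : A₃.card = B₃.card) :
    ∃ δ : Equiv.Perm (Fin n), (∀ x ∈ A₁, δ x ∈ B₁) ∧ (∀ x ∈ A₂, δ x ∈ B₂) ∧
      (∀ x ∈ A₃, δ x ∈ B₃) := by
  classical
  let e₁ : {x // x ∈ A₁} ≃ {x // x ∈ B₁} := Finset.equivOfCardEq h1
  let e₂ : {x // x ∈ A₂} ≃ {x // x ∈ B₂} := Finset.equivOfCardEq h2
  let e₃ : {x // x ∈ A₃} ≃ {x // x ∈ B₃} := Finset.equivOfCardEq h3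
  set F : Fin n → Fin n := fun x =>
    if h : x ∈ A₁ then (e₁ ⟨x, h⟩ : _)
    else if h : x ∈ A₂ then (e₂ ⟨x, h⟩ : _)
    else if h : x ∈ A₃ then (e₃ ⟨x, h⟩ : _) else x with hF
  have hF1 : ∀ (x) (h : x ∈ A₁), F x = (e₁ ⟨x, h⟩ : _) := fun x h => by simp [hF, h]
  have hF2 : ∀ (x) (h : x ∈ A₂), F x = (e₂ ⟨x, h⟩ : _) := fun x h => by
    have h1' : x ∉ A₁ := fun hx => (Finset.disjoint_left.1 hA12) hx h
    simp [hF, h, h1']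
  have hF3 : ∀ (x) (h : x ∈ A₃), F x = (e₃ ⟨x, h⟩ : _) := fun x h => by
    have h1' : x ∉ A₁ := fun hx => (Finset.disjoint_left.1 hA13) hx h
    have h2' : x ∉ A₂ := fun hx => (Finset.disjoint_left.1 hA23) hx h
    simp [hF, h, h1', h2']
  have hFB1 : ∀ (x) (h : x ∈ A₁), F x ∈ B₁ := fun x h => by
    rw [hF1 x h]; exact (e₁ ⟨x, h⟩).property
  have hFB2 : ∀ (x) (h : x ∈ A₂), F x ∈ B₂ := fun x h => by
    rw [hF2 x h]; exact (e₂ ⟨x, h⟩).property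
  have hFB3 : ∀ (x) (h : x ∈ A₃), F x ∈ B₃ := fun x h => by
    rw [hF3 x h]; exact (e₃ ⟨x, h⟩).property
  have hinj : Set.InjOn F ((A₁ ∪ A₂) ∪ A₃ : Finset (Fin n)) := by
    intro x hx y hy hxy
    simp only [Finset.coe_union, Set.mem_union, Finset.mem_coe, Finset.mem_union] at hx hy
    have hmem : ∀ (z : Fin n), z ∈ A₁ ∨ z ∈ A₂ ∨ z ∈ A₃ → ∀ (w : Fin n),
        w ∈ A₁ ∨ w ∈ A₂ ∨ w ∈ A₃ → F z = F w → z = w := by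
      intro z hz w hw hzw
      have same : ∀ (C D : Finset (Fin n)) (ee : {x // x ∈ C} ≃ {x // x ∈ D})
          (hz' : z ∈ C) (hw' : w ∈ C), F z = (ee ⟨z, hz'⟩ : _) → F w = (ee ⟨w, hw'⟩ : _) →
          z = w := by
        intro C D ee hz' hw' h₁ h₂
        have he : ee ⟨z, hz'⟩ = ee ⟨w, hw'⟩ := Subtype.ext (by rw [← h₁, ← h₂, hzw])
        have := ee.injective he
        exact congrArg Subtype.val this
      have cross : ∀ (P Q : Finset (Fin n)), Disjoint P Q → F z ∈ P → F w ∈ Q → z = w := by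
        intro P Q hPQ h₁ h₂
        exfalso
        rw [hzw] at h₁
        exact (Finset.disjoint_left.1 hPQ) h₁ h₂
      have cross' : ∀ (P Q : Finset (Fin n)), Disjoint P Q → F z ∈ Q → F w ∈ P → z = w := by
        intro P Q hPQ h₁ h₂
        exact cross Q P hPQ.symm h₁ h₂
      rcases hz with hz | hz | hz <;> rcases hw with hw | hw | hw
      · exact same A₁ B₁ e₁ hz hw (hF1 z hz) (hF1 w hw)
      · exact cross B₁ B₂ hB12 (hFB1 z hz) (hFB2 w hw)
      · exact cross B₁ B₃ hB13 (hFB1 z hz) (hFB3 w hw)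
      · exact cross' B₁ B₂ hB12 (hFB2 z hz) (hFB1 w hw)
      · exact same A₂ B₂ e₂ hz hw (hF2 z hz) (hF2 w hw)
      · exact cross B₂ B₃ hB23 (hFB2 z hz) (hFB3 w hw)
      · exact cross' B₁ B₃ hB13 (hFB3 z hz) (hFB1 w hw)
      · exact cross' B₂ B₃ hB23 (hFB3 z hz) (hFB2 w hw)
      · exact same A₃ B₃ e₃ hz hw (hF3 z hz) (hF3 w hw)
    have hx' : x ∈ A₁ ∨ x ∈ A₂ ∨ x ∈ A₃ := by tauto
    have hy' : y ∈ A₁ ∨ y ∈ A₂ ∨ y ∈ A₃ := by tauto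
    exact hmem x hx' y hy' hxy
  obtain ⟨δ, hδ⟩ := exists_perm_extend ((A₁ ∪ A₂) ∪ A₃) F hinj
  refine ⟨δ, fun x h => ?_, fun x h => ?_, fun x h => ?_⟩
  · rw [hδ x (by simp [h])]; exact hFB1 x h
  · rw [hδ x (by simp [h])]; exact hFB2 x h
  · rw [hδ x (by simp [h])]; exact hFB3 x h

end Ext

section Core
variable {n : ℕ}

open Finset

/-- the subsemigroup generated by the conjugacy class -/
abbrev cl (a : Tn n) : Subsemigroup (Tn n) := Subsemigroup.closure (conjClass a)

lemma ofPerm_mul_inv (g : Equiv.Perm (Fin n)) : ofPerm g * ofPerm g⁻¹ = 1 := by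
  funext x
  show g (g⁻¹ x) = x
  simp

lemma ofPerm_inv_mul (g : Equiv.Perm (Fin n)) : ofPerm g⁻¹ * ofPerm g = 1 := by
  funext x
  show g⁻¹ (g x) = x
  simp

lemma conj_mem_cl (a : Tn n) {b : Tn n} (hb : b ∈ cl a) (g : Equiv.Perm (Fin n)) :
    ofPerm g⁻¹ * b * ofPerm g ∈ cl a := by
  induction hb using Subsemigroup.closure_induction with
  | mem x hx =>
    rcases hx with ⟨p, rfl⟩
    have : ofPerm g⁻¹ * (ofPerm p⁻¹ * a * ofPerm p) * ofPerm g =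
        ofPerm (p * g)⁻¹ * a * ofPerm (p * g) := by
      rw [mul_inv_rev, ofPerm_mul, ofPerm_mul]
      simp [mul_assoc]
    rw [this]
    exact Subsemigroup.subset_closure ⟨p * g, rfl⟩
  | mul x y hx hy ihx ihy =>
    have : ofPerm g⁻¹ * (x * y) * ofPerm g =
        (ofPerm g⁻¹ * x * ofPerm g) * (ofPerm g⁻¹ * y * ofPerm g) := by
      have h1 : ofPerm g * ofPerm g⁻¹ = 1 := ofPerm_mul_inv g
      calc ofPerm g⁻¹ * (x * y) * ofPerm g
          = ofPerm g⁻¹ * x * (ofPerm g * ofPerm g⁻¹) * y * ofPerm g := by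
            rw [h1]; simp [mul_assoc]
        _ = (ofPerm g⁻¹ * x * ofPerm g) * (ofPerm g⁻¹ * y * ofPerm g) := by
            simp [mul_assoc]
    rw [this]
    exact mul_mem ihx ihy

lemma a_mem_cl (a : Tn n) : a ∈ cl a := by
  apply Subsemigroup.subset_closure
  exact ⟨1, by simp [ofPerm_one]⟩

lemma pow_mem_cl (a : Tn n) {b : Tn n} (hb : b ∈ cl a) (m : ℕ) : b ^ (m + 1) ∈ cl a := by
  induction m with
  | zero => simpa using hb
  | succ m ih =>
    rw [pow_succ]
    exact mul_mem ih hb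

lemma rnk_le_of_mem_cl (a : Tn n) {b : Tn n} (hb : b ∈ cl a) : rnk b ≤ rnk a := by
  induction hb using Subsemigroup.closure_induction with
  | mem x hx => rcases hx with ⟨p, rfl⟩; rw [rnk_conj]
  | mul x y hx hy ihx ihy => exact le_trans (rnk_mul_le_left x y) ihx

/-- Phase 1: an element of the closure acting as the identity on the image of `a`,
with all values inside the image of `a`. -/
lemma exists_idOnI (a : Tn n) :
    ∃ e₀ : Tn n, e₀ ∈ cl a ∧ (∀ y ∈ img a, e₀ y = y) ∧ (∀ x, e₀ x ∈ img a) := by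
  classical
  set I := img a with hI
  have hsec : ∀ y : Fin n, ∃ x, y ∈ I → a x = y := by
    intro y
    by_cases hy : y ∈ I
    · rcases mem_img.1 hy with ⟨x, hx⟩
      exact ⟨x, fun _ => hx⟩
    · exact ⟨y, fun h => absurd h hy⟩
  choose t ht using hsec
  have htinj : Set.InjOn t I := by
    intro u hu v hv huv
    rw [← ht u hu, ← ht v hv, huv]
  set T := I.image t with hT
  have hTcard : T.card = I.card := Finset.card_image_of_injOn htinj
  have haT : ∀ w ∈ T, a w ∈ I ∧ t (a w) = w := by
    intro w hw
    rcases Finset.mem_image.1 hw with ⟨y, hy, rfl⟩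
    rw [ht y hy]
    exact ⟨hy, rfl⟩
  have haTinj : Set.InjOn a T := by
    intro u hu v hv h
    rw [← (haT u hu).2, ← (haT v hv).2, h]
  obtain ⟨δ₁, hδ₁⟩ := exists_perm_extend I t htinj
  set c₁ : Tn n := ofPerm δ₁⁻¹ * a * ofPerm δ₁ with hc₁
  have hc₁mem : c₁ ∈ cl a := Subsemigroup.subset_closure ⟨δ₁, rfl⟩
  have hc₁I : ∀ y ∈ I, c₁ y = δ₁⁻¹ y := by
    intro y hy
    show δ₁⁻¹ (a (δ₁ y)) = δ₁⁻¹ y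
    rw [hδ₁ y hy, ht y hy]
  set S₁ := I.image (⇑δ₁⁻¹) with hS₁
  have hS₁card : S₁.card = I.card := Finset.card_image_of_injective _ (Equiv.injective _)
  have himgδ₁S₁ : S₁.image ⇑δ₁ = I := by
    rw [hS₁, Finset.image_image]
    have : (⇑δ₁ ∘ ⇑δ₁⁻¹) = id := by funext x; simp
    rw [this, Finset.image_id]
  have himgδ₁I : I.image ⇑δ₁ = T := by
    rw [hT]
    exact Finset.image_congr (fun x hx => hδ₁ x hx)
  have hkey : ((S₁ ∩ I).image ⇑δ₁) = I ∩ T := by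
    rw [Finset.image_inter _ _ δ₁.injective, himgδ₁S₁, himgδ₁I]
  have hm : (S₁ ∩ I).card = (T ∩ I).card := by
    have hc := congrArg Finset.card hkey
    rw [Finset.card_image_of_injective _ δ₁.injective] at hc
    rw [hc, Finset.inter_comm]
  have hcs1 := Finset.card_sdiff_add_card_inter S₁ I
  have hcs2 := Finset.card_sdiff_add_card_inter T I
  have hcs3 := Finset.card_sdiff_add_card_inter I S₁
  have hcs4 := Finset.card_sdiff_add_card_inter I T
  have hic1 : (I ∩ S₁).card = (S₁ ∩ I).card := by rw [Finset.inter_comm]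
  have hic2 : (I ∩ T).card = (T ∩ I).card := by rw [Finset.inter_comm]
  have dd : ∀ (P Q : Finset (Fin n)), Disjoint (P ∩ Q) (P \ Q) := by
    intro P Q
    rw [Finset.disjoint_left]
    intro x hx hx'
    exact (Finset.mem_sdiff.1 hx').2 (Finset.mem_inter.1 hx).2
  have dd2 : ∀ (P Q : Finset (Fin n)), Disjoint (P ∩ Q) (Q \ P) := by
    intro P Q
    rw [Finset.disjoint_left]
    intro x hx hx'
    exact (Finset.mem_sdiff.1 hx').2 (Finset.mem_inter.1 hx).1
  have dd3 : ∀ (P Q : Finset (Fin n)), Disjoint (P \ Q) (Q \ P) := by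
    intro P Q
    rw [Finset.disjoint_left]
    intro x hx hx'
    exact (Finset.mem_sdiff.1 hx).2 (Finset.mem_sdiff.1 hx').1
  obtain ⟨δ₂, hp1, hp2, hp3⟩ :=
    exists_perm_pieces (S₁ ∩ I) (S₁ \ I) (I \ S₁) (T ∩ I) (T \ I) (I \ T)
      (dd S₁ I) (dd2 S₁ I) (dd3 S₁ I)
      (dd T I) (dd2 T I) (dd3 T I)
      hm (by omega) (by omega)
  have hδ₂T : ∀ x ∈ S₁, δ₂ x ∈ T := by
    intro x hx
    by_cases hxi : x ∈ I
    · exact Finset.mem_of_mem_inter_left (hp1 x (Finset.mem_inter.2 ⟨hx, hxi⟩))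
    · exact (Finset.mem_sdiff.1 (hp2 x (Finset.mem_sdiff.2 ⟨hx, hxi⟩))).1
  have hδ₂I : ∀ x ∈ I, δ₂ x ∈ I := by
    intro x hx
    by_cases hxs : x ∈ S₁
    · exact Finset.mem_of_mem_inter_right (hp1 x (Finset.mem_inter.2 ⟨hxs, hx⟩))
    · exact (Finset.mem_sdiff.1 (hp3 x (Finset.mem_sdiff.2 ⟨hx, hxs⟩))).1
  have himgδ₂ : I.image ⇑δ₂ = I := by
    apply Finset.eq_of_subset_of_card_le
    · intro y hy
      rcases Finset.mem_image.1 hy with ⟨x, hx, rfl⟩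
      exact hδ₂I x hx
    · rw [Finset.card_image_of_injective _ δ₂.injective]
  have hδ₂invI : ∀ y ∈ I, δ₂⁻¹ y ∈ I := by
    intro y hy
    rcases Finset.mem_image.1 (himgδ₂ ▸ hy) with ⟨x, hx, hxe⟩
    have : δ₂⁻¹ y = x := by rw [← hxe]; simp
    rw [this]; exact hx
  set c₂ : Tn n := ofPerm δ₂⁻¹ * a * ofPerm δ₂ with hc₂
  have hc₂mem : c₂ ∈ cl a := Subsemigroup.subset_closure ⟨δ₂, rfl⟩
  have hc₂S₁ : ∀ z ∈ S₁, c₂ z ∈ I := by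
    intro z hz
    show δ₂⁻¹ (a (δ₂ z)) ∈ I
    exact hδ₂invI _ ((haT _ (hδ₂T z hz)).1)
  set u₀ : Tn n := c₂ * c₁ with hu₀
  have hu₀mem : u₀ ∈ cl a := mul_mem hc₂mem hc₁mem
  have hc₁all : ∀ x, c₁ x ∈ S₁ := by
    intro x
    show δ₁⁻¹ (a (δ₁ x)) ∈ S₁
    exact Finset.mem_image_of_mem _ (apply_mem_img a (δ₁ x))
  have hu₀all : ∀ x, u₀ x ∈ I := by
    intro x
    show c₂ (c₁ x) ∈ I
    exact hc₂S₁ _ (hc₁all x)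
  have hu₀inj : Set.InjOn u₀ I := by
    intro y₁ hy₁ y₂ hy₂ h
    have h1 : ∀ y (hy : y ∈ I), u₀ y = δ₂⁻¹ (a (δ₂ (δ₁⁻¹ y))) := by
      intro y hy
      show c₂ (c₁ y) = _
      rw [hc₁I y hy]
      rfl
    rw [h1 y₁ hy₁, h1 y₂ hy₂] at h
    have hz₁ : δ₁⁻¹ y₁ ∈ S₁ := Finset.mem_image_of_mem _ hy₁
    have hz₂ : δ₁⁻¹ y₂ ∈ S₁ := Finset.mem_image_of_mem _ hy₂
    have h2 : a (δ₂ (δ₁⁻¹ y₁)) = a (δ₂ (δ₁⁻¹ y₂)) := (Equiv.injective _) h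
    have h3 : δ₂ (δ₁⁻¹ y₁) = δ₂ (δ₁⁻¹ y₂) :=
      haTinj (hδ₂T _ hz₁) (hδ₂T _ hz₂) h2
    have h4 : (δ₁⁻¹ y₁ : Fin n) = δ₁⁻¹ y₂ := δ₂.injective h3
    exact (Equiv.injective _) h4
  -- the induced permutation of I and the power trick
  have hu₀I : ∀ (y : Fin n), y ∈ I → u₀ y ∈ I := fun y _ => hu₀all y
  have hbij : Function.Bijective
      (fun z : {x // x ∈ I} => (⟨u₀ z.val, hu₀all z.val⟩ : {x // x ∈ I})) := by
    apply Finite.injective_iff_bijective.1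
    intro z w h
    exact Subtype.ext (hu₀inj z.property w.property (congrArg Subtype.val h))
  set e := Equiv.ofBijective _ hbij with he
  have hpow : ∀ m : ℕ, ∀ y (hy : y ∈ I), (u₀ ^ (m+1)) y = ((e ^ (m+1)) ⟨y, hy⟩).val := by
    intro m
    induction m with
    | zero =>
      intro y hy
      rw [pow_one, pow_one]
      rfl
    | succ m ih =>
      intro y hy
      have h1 : u₀ ^ (m+1+1) = u₀ ^ (m+1) * u₀ := pow_succ u₀ (m+1)
      rw [h1, mul_apply, ih (u₀ y) (hu₀all y)]
      have h2 : (e ^ (m+1+1)) ⟨y, hy⟩ = (e ^ (m+1)) (e ⟨y, hy⟩) := by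
        rw [pow_succ]
        rfl
      rw [h2]
      rfl
  have hpowall : ∀ m : ℕ, ∀ x, (u₀ ^ (m+1)) x ∈ I := by
    intro m
    induction m with
    | zero => intro x; rw [pow_one]; exact hu₀all x
    | succ m ih =>
      intro x
      rw [pow_succ, mul_apply]
      exact ih (u₀ x)
  obtain ⟨m, hm⟩ : ∃ m, orderOf e = m + 1 :=
    ⟨orderOf e - 1, (Nat.succ_pred_eq_of_pos (orderOf_pos e)).symm⟩
  have hek : e ^ (m + 1) = 1 := by rw [← hm]; exact pow_orderOf_eq_one e
  refine ⟨u₀ ^ (m+1), pow_mem_cl a hu₀mem m, ?_, ?_⟩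
  · intro y hy
    rw [hpow m y hy, hek]
    rfl
  · exact hpowall m
end Core

section Moves
variable {n : ℕ}

open Finset

lemma exists_notin (a : Tn n) (ha : ¬ Function.Bijective a)
    (S : Finset (Fin n)) (hScard : S.card = (img a).card) : ∃ f, f ∉ S := by
  have hIlt : S.card < n := by
    have := rnk_lt a ha
    rw [rnk_eq_card_img] at this
    omega
  by_contra h
  push_neg at h
  have : S = Finset.univ := Finset.eq_univ_of_forall h
  rw [this] at hIlt
  simp at hIlt

/-- One free "token move" fixing the rest of an r-element set. -/
lemma exists_move (a : Tn n) (ha : ¬ Function.Bijective a)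
    (S : Finset (Fin n)) (hScard : S.card = (img a).card)
    (s t : Fin n) (hs : s ∈ S) (ht : t ∉ S) :
    ∃ c ∈ cl a, (∀ x ∈ S, x ≠ s → c x = x) ∧ c s = t := by
  classical
  obtain ⟨e₀, he₀mem, he₀id, he₀img⟩ := exists_idOnI a
  obtain ⟨f, hf⟩ := exists_notin a ha (img a) rfl
  set y₀ := e₀ f with hy₀
  have hy₀I : y₀ ∈ img a := he₀img f
  have hfy₀ : f ≠ y₀ := fun h => hf (h ▸ hy₀I)
  have hcard : (S.erase s).card = ((img a).erase y₀).card := by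
    rw [Finset.card_erase_of_mem hs, Finset.card_erase_of_mem hy₀I, hScard]
  let eqv : {x // x ∈ S.erase s} ≃ {x // x ∈ (img a).erase y₀} := Finset.equivOfCardEq hcard
  have hts : t ≠ s := fun h => ht (h ▸ hs)
  set F : Fin n → Fin n := fun x =>
    if h : x ∈ S.erase s then (eqv ⟨x, h⟩ : _)
    else if x = s then f
    else if x = t then y₀ else x with hF
  have hFs : F s = f := by
    have h1 : s ∉ S.erase s := Finset.notMem_erase s S
    show (if h : s ∈ S.erase s then (eqv ⟨s, h⟩ : Fin n) else if s = s then f else if s = t then y₀ else s) = f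
    rw [dif_neg h1, if_pos rfl]
  have hFt : F t = y₀ := by
    have h1 : t ∉ S.erase s := fun h => ht (Finset.mem_of_mem_erase h)
    show (if h : t ∈ S.erase s then (eqv ⟨t, h⟩ : Fin n) else if t = s then f else if t = t then y₀ else t) = y₀
    rw [dif_neg h1, if_neg hts, if_pos rfl]
  have hFx : ∀ (x) (h : x ∈ S.erase s), F x = (eqv ⟨x, h⟩ : _) := by
    intro x h
    show (if h : x ∈ S.erase s then (eqv ⟨x, h⟩ : Fin n) else if x = s then f else if x = t then y₀ else x) = _
    rw [dif_pos h]
  have hFmem : ∀ (x) (h : x ∈ S.erase s), F x ∈ (img a).erase y₀ := by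
    intro x h
    rw [hFx x h]
    exact (eqv ⟨x, h⟩).property
  have hclass : ∀ z ∈ insert t S, z ∈ S.erase s ∨ z = s ∨ z = t := by
    intro z hz
    rcases Finset.mem_insert.1 hz with hz | hz
    · exact Or.inr (Or.inr hz)
    · by_cases h : z = s
      · exact Or.inr (Or.inl h)
      · exact Or.inl (Finset.mem_erase.2 ⟨h, hz⟩)
  have hinj : Set.InjOn F (insert t S : Finset (Fin n)) := by
    intro z hz w hw hzw
    simp only [Finset.coe_insert, Set.mem_insert_iff, Finset.mem_coe] at hz hw
    have hz' : z ∈ S.erase s ∨ z = s ∨ z = t := by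
      apply hclass
      rcases hz with hz | hz
      · exact hz ▸ Finset.mem_insert_self t S
      · exact Finset.mem_insert_of_mem hz
    have hw' : w ∈ S.erase s ∨ w = s ∨ w = t := by
      apply hclass
      rcases hw with hw | hw
      · exact hw ▸ Finset.mem_insert_self t S
      · exact Finset.mem_insert_of_mem hw
    rcases hz' with hz' | hz' | hz' <;> rcases hw' with hw' | hw' | hw'
    · have : eqv ⟨z, hz'⟩ = eqv ⟨w, hw'⟩ :=
        Subtype.ext (by rw [← hFx z hz', ← hFx w hw', hzw])
      exact congrArg Subtype.val (eqv.injective this)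
    · exfalso
      have h1 := hFmem z hz'
      rw [hzw, hw', hFs] at h1
      exact hf (Finset.mem_of_mem_erase h1)
    · exfalso
      have h1 := hFmem z hz'
      rw [hzw, hw', hFt] at h1
      exact (Finset.mem_erase.1 h1).1 rfl
    · exfalso
      have h1 := hFmem w hw'
      rw [← hzw, hz', hFs] at h1
      exact hf (Finset.mem_of_mem_erase h1)
    · rw [hz', hw']
    · exfalso
      rw [hz', hw', hFs, hFt] at hzw
      exact hfy₀ hzw
    · exfalso
      have h1 := hFmem w hw'
      rw [← hzw, hz', hFt] at h1
      exact (Finset.mem_erase.1 h1).1 rfl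
    · exfalso
      rw [hz', hw', hFs, hFt] at hzw
      exact hfy₀ hzw.symm
    · rw [hz', hw']
  obtain ⟨δ, hδ⟩ := exists_perm_extend (insert t S) F hinj
  refine ⟨ofPerm δ⁻¹ * e₀ * ofPerm δ, conj_mem_cl a he₀mem δ, ?_, ?_⟩
  · intro x hx hxs
    have hx' : x ∈ S.erase s := Finset.mem_erase.2 ⟨hxs, hx⟩
    have h1 : δ x = F x := hδ x (Finset.mem_insert_of_mem hx)
    have h2 : δ x ∈ img a := by
      rw [h1]
      exact Finset.mem_of_mem_erase (hFmem x hx')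
    show δ⁻¹ (e₀ (δ x)) = x
    rw [he₀id _ h2]
    simp
  · show δ⁻¹ (e₀ (δ s)) = t
    have h1 : δ s = f := by rw [hδ s (Finset.mem_insert_of_mem hs), hFs]
    have h2 : δ t = y₀ := by rw [hδ t (Finset.mem_insert_self t S), hFt]
    rw [h1, ← hy₀, ← h2]
    simp

/-- Token rearrangement: any injection on the image is realizable. -/
lemma sort (a : Tn n) (ha : ¬ Function.Bijective a) :
    ∀ (d : ℕ) (χ φ : Fin n → Fin n), Set.InjOn χ (img a) → Set.InjOn φ (img a) →
    (∃ u ∈ cl a, ∀ y ∈ img a, u y = χ y) →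
    (((img a).filter (fun y => χ y ≠ φ y)).card ≤ d) →
    ∃ u ∈ cl a, ∀ y ∈ img a, u y = φ y := by
  classical
  have step : ∀ (χ : Fin n → Fin n), Set.InjOn χ (img a) →
      (∃ u ∈ cl a, ∀ y ∈ img a, u y = χ y) →
      ∀ (y : Fin n), y ∈ img a → ∀ (t : Fin n), t ∉ (img a).image χ →
      (∃ u ∈ cl a, ∀ y' ∈ img a, u y' = Function.update χ y t y') ∧
        Set.InjOn (Function.update χ y t) (img a) := by
    intro χ hχ hre y hy t htno
    obtain ⟨u, hu, hur⟩ := hre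
    obtain ⟨c, hc, hcfix, hcmove⟩ := exists_move a ha ((img a).image χ)
      (Finset.card_image_of_injOn hχ) (χ y) t (Finset.mem_image_of_mem χ hy) htno
    constructor
    · refine ⟨c * u, mul_mem hc hu, fun y' hy' => ?_⟩
      rw [mul_apply, hur y' hy']
      by_cases h : y' = y
      · subst h
        rw [hcmove, Function.update_self]
      · rw [hcfix (χ y') (Finset.mem_image_of_mem χ hy') (fun he => h (hχ hy' hy he)),
          Function.update_of_ne h]
    · intro p hp q hq hpq
      by_cases hpy : p = y <;> by_cases hqy : q = y
      · rw [hpy, hqy]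
      · exfalso
        rw [hpy, Function.update_self, Function.update_of_ne hqy] at hpq
        exact htno (hpq ▸ Finset.mem_image_of_mem χ hq)
      · exfalso
        rw [hqy, Function.update_self, Function.update_of_ne hpy] at hpq
        exact htno (hpq ▸ Finset.mem_image_of_mem χ hp)
      · rw [Function.update_of_ne hpy, Function.update_of_ne hqy] at hpq
        exact hχ hp hq hpq
  intro d
  induction d with
  | zero =>
    rintro χ φ hχ hφ ⟨u, hu, hreal⟩ hd
    refine ⟨u, hu, fun y hy => ?_⟩
    have hcp : χ y = φ y := by
      by_contra hne
      have h1 : y ∈ (img a).filter (fun z => χ z ≠ φ z) := Finset.mem_filter.2 ⟨hy, hne⟩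
      have h2 := Finset.card_pos.2 ⟨y, h1⟩
      omega
    rw [hreal y hy, hcp]
  | succ d ih =>
    intro χ φ hχ hφ hreal hd
    by_cases hempty : ((img a).filter (fun z => χ z ≠ φ z)) = ∅
    · exact ih χ φ hχ hφ hreal (by rw [hempty]; simp)
    obtain ⟨y, hyf⟩ := Finset.nonempty_iff_ne_empty.2 hempty
    obtain ⟨hy, hyne⟩ := Finset.mem_filter.1 hyf
    by_cases hmem : φ y ∈ (img a).image χ
    · -- case B: evict occupant of slot φ y first
      obtain ⟨y₂, hy₂, hχy₂⟩ := Finset.mem_image.1 hmem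
      have hy₂ne : y₂ ≠ y := fun h => hyne (by rw [← hχy₂, h])
      obtain ⟨o, ho⟩ := exists_notin a ha ((img a).image χ) (Finset.card_image_of_injOn hχ)
      obtain ⟨hre₁, hinj₁⟩ := step χ hχ hreal y₂ hy₂ o ho
      set χ₁ := Function.update χ y₂ o with hχ₁def
      have hχ₁y : χ₁ y = χ y := Function.update_of_ne (fun h => hy₂ne h.symm) _ _
      have hφnot : φ y ∉ (img a).image χ₁ := by
        intro hmem₁
        obtain ⟨z, hz, hze⟩ := Finset.mem_image.1 hmem₁
        by_cases hzy₂ : z = y₂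
        · rw [hzy₂, hχ₁def, Function.update_self] at hze
          rw [← hze] at hmem
          exact ho hmem
        · rw [hχ₁def, Function.update_of_ne hzy₂] at hze
          exact hzy₂ (hχ hz hy₂ (by rw [hze, hχy₂]))
      obtain ⟨hre₂, hinj₂⟩ := step χ₁ hinj₁ hre₁ y hy (φ y) hφnot
      set χ₂ := Function.update χ₁ y (φ y) with hχ₂def
      apply ih χ₂ φ hinj₂ hφ hre₂
      have hsub : ((img a).filter (fun z => χ₂ z ≠ φ z)) ⊆
          ((img a).filter (fun z => χ z ≠ φ z)).erase y := by
        intro z hzf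
        obtain ⟨hzI, hzne⟩ := Finset.mem_filter.1 hzf
        have hzy : z ≠ y := by
          intro h
          apply hzne
          rw [h, hχ₂def, Function.update_self]
        refine Finset.mem_erase.2 ⟨hzy, Finset.mem_filter.2 ⟨hzI, ?_⟩⟩
        by_cases hzy₂ : z = y₂
        · rw [hzy₂, hχy₂]
          intro h
          exact hy₂ne (hφ hy hy₂ h).symm
        · intro h
          apply hzne
          rw [hχ₂def, Function.update_of_ne hzy, hχ₁def, Function.update_of_ne hzy₂, h]
      have hcard : (((img a).filter (fun z => χ z ≠ φ z)).erase y).card ≤ d := by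
        have h1 : y ∈ (img a).filter (fun z => χ z ≠ φ z) := hyf
        have h2 := Finset.card_erase_of_mem h1
        omega
      exact le_trans (Finset.card_le_card hsub) hcard
    · -- case A : direct move
      obtain ⟨hre₁, hinj₁⟩ := step χ hχ hreal y hy (φ y) hmem
      set χ₁ := Function.update χ y (φ y) with hχ₁def
      apply ih χ₁ φ hinj₁ hφ hre₁
      have hsub : ((img a).filter (fun z => χ₁ z ≠ φ z)) ⊆
          ((img a).filter (fun z => χ z ≠ φ z)).erase y := by
        intro z hzf
        obtain ⟨hzI, hzne⟩ := Finset.mem_filter.1 hzf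
        have hzy : z ≠ y := by
          intro h
          apply hzne
          rw [h, hχ₁def, Function.update_self]
        refine Finset.mem_erase.2 ⟨hzy, Finset.mem_filter.2 ⟨hzI, ?_⟩⟩
        intro h
        apply hzne
        rw [hχ₁def, Function.update_of_ne hzy, h]
      have hcard : (((img a).filter (fun z => χ z ≠ φ z)).erase y).card ≤ d := by
        have h1 : y ∈ (img a).filter (fun z => χ z ≠ φ z) := hyf
        have h2 := Finset.card_erase_of_mem h1
        omega
      exact le_trans (Finset.card_le_card hsub) hcard

/-- Realize any permutation's action on the image. -/
lemma realize_perm (a : Tn n) (ha : ¬ Function.Bijective a) (g : Equiv.Perm (Fin n)) :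
    ∃ u ∈ cl a, ∀ y ∈ img a, u y = g y := by
  classical
  obtain ⟨e₀, he₀mem, he₀id, _⟩ := exists_idOnI a
  exact sort a ha (((img a).filter (fun y => id y ≠ g y)).card) id ⇑g
    (fun p _ q _ h => h) (fun p _ q _ h => g.injective h)
    ⟨e₀, he₀mem, fun y hy => he₀id y hy⟩ (le_refl _)

end Moves

section Main
variable {n : ℕ}

lemma conj_mem_cl' (a : Tn n) {b : Tn n} (hb : b ∈ cl a) (g : Equiv.Perm (Fin n)) :
    ofPerm g * b * ofPerm g⁻¹ ∈ cl a := by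
  have := conj_mem_cl a hb g⁻¹
  rwa [inv_inv] at this

lemma key2 (a : Tn n) (ha : ¬ Function.Bijective a) (g : Equiv.Perm (Fin n)) :
    a * ofPerm g ∈ cl a := by
  obtain ⟨u, hu, hur⟩ := realize_perm a ha g
  have hpt : ∀ x, ((ofPerm g⁻¹ * u * ofPerm g) * (ofPerm g⁻¹ * a * ofPerm g)) x
      = (a * ofPerm g) x := by
    intro x
    show g⁻¹ (u (g (g⁻¹ (a (g x))))) = a (g x)
    rw [Equiv.Perm.coe_inv, Equiv.apply_symm_apply, hur (a (g x)) (apply_mem_img a (g x)),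
      Equiv.symm_apply_apply]
  have heq : a * ofPerm g = (ofPerm g⁻¹ * u * ofPerm g) * (ofPerm g⁻¹ * a * ofPerm g) :=
    funext fun x => (hpt x).symm
  rw [heq]
  exact mul_mem (conj_mem_cl a hu g) (Subsemigroup.subset_closure ⟨g, rfl⟩)

lemma mul_ofPerm_mem_cl (a : Tn n) (ha : ¬ Function.Bijective a) {b : Tn n}
    (hb : b ∈ cl a) (g : Equiv.Perm (Fin n)) : b * ofPerm g ∈ cl a := by
  induction hb using Subsemigroup.closure_induction with
  | mem x hx =>
    rcases hx with ⟨p, rfl⟩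
    have heq : (ofPerm p⁻¹ * a * ofPerm p) * ofPerm g =
        ofPerm p⁻¹ * (a * ofPerm (p * g * p⁻¹)) * ofPerm p := by
      funext x
      show p⁻¹ (a (p (g x))) = p⁻¹ (a ((p * g * p⁻¹) (p x)))
      have : (p * g * p⁻¹) (p x) = p (g x) := by
        show p (g (p⁻¹ (p x))) = p (g x)
        rw [Equiv.Perm.coe_inv, Equiv.symm_apply_apply]
      rw [this]
    rw [heq]
    exact conj_mem_cl a (key2 a ha (p * g * p⁻¹)) p
  | mul x y hx hy ihx ihy =>
    rw [mul_assoc]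
    exact mul_mem hx ihy

lemma cl_le_big (a : Tn n) :
    (cl a : Subsemigroup (Tn n)) ≤ Subsemigroup.closure ({a} ∪ perms n) := by
  apply Subsemigroup.closure_le.2
  rintro b ⟨p, rfl⟩
  have h1 : ofPerm p⁻¹ ∈ Subsemigroup.closure ({a} ∪ perms n) :=
    Subsemigroup.subset_closure (Or.inr ⟨p⁻¹, rfl⟩)
  have h2 : a ∈ Subsemigroup.closure ({a} ∪ perms n) :=
    Subsemigroup.subset_closure (Or.inl rfl)
  have h3 : ofPerm p ∈ Subsemigroup.closure ({a} ∪ perms n) :=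
    Subsemigroup.subset_closure (Or.inr ⟨p, rfl⟩)
  exact mul_mem (mul_mem h1 h2) h3

lemma normal_form (a : Tn n) {w : Tn n}
    (hw : w ∈ Subsemigroup.closure ({a} ∪ perms n)) :
    w ∈ perms n ∨ ∃ c ∈ cl a, ∃ g : Equiv.Perm (Fin n), w = c * ofPerm g := by
  induction hw using Subsemigroup.closure_induction with
  | mem x hx =>
    rcases hx with hx | hx
    · right
      refine ⟨a, a_mem_cl a, 1, ?_⟩
      rw [Set.mem_singleton_iff.1 hx, ofPerm_one, mul_one]
    · left; exact hx
  | mul x y hx hy ihx ihy =>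
    rcases ihx with ⟨p, rfl⟩ | ⟨c, hc, g, rfl⟩ <;> rcases ihy with ⟨q, rfl⟩ | ⟨c', hc', g', rfl⟩
    · left
      exact ⟨p * q, rfl⟩
    · right
      refine ⟨ofPerm p * c' * ofPerm p⁻¹, conj_mem_cl' a hc' p, p * g', ?_⟩
      funext x
      show p (c' (g' x)) = p (c' (p⁻¹ (p (g' x))))
      rw [Equiv.Perm.coe_inv, Equiv.symm_apply_apply]
    · right
      refine ⟨c, hc, g * q, ?_⟩
      rw [ofPerm_mul, ← mul_assoc]
    · right
      refine ⟨c * (ofPerm g * c' * ofPerm g⁻¹), mul_mem hc (conj_mem_cl' a hc' g),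
        g * g', ?_⟩
      funext x
      show c (g (c' (g' x))) = c (g (c' (g⁻¹ (g (g' x)))))
      rw [Equiv.Perm.coe_inv, Equiv.symm_apply_apply]

end Main

end LM

open LM in
theorem stmt19' (n : ℕ) (a : Tn n) (ha : ¬ Function.Bijective a) :
    (↑(Subsemigroup.closure ({a} ∪ perms n)) : Set (Tn n)) \ perms n =
      {t : Tn n | rnk t ≤ rnk a ∧ t ∈ Subsemigroup.closure (conjClass a)} ∧
    ∀ t ∈ (↑(Subsemigroup.closure ({a} ∪ perms n)) : Set (Tn n)) \ perms n,
      ∀ g : Equiv.Perm (Fin n),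
        ofPerm g⁻¹ * t * ofPerm g ∈
          (↑(Subsemigroup.closure ({a} ∪ perms n)) : Set (Tn n)) \ perms n := by
  have hset : (↑(Subsemigroup.closure ({a} ∪ perms n)) : Set (Tn n)) \ perms n =
      {t : Tn n | rnk t ≤ rnk a ∧ t ∈ Subsemigroup.closure (conjClass a)} := by
    ext w
    simp only [Set.mem_diff, Set.mem_setOf_eq, SetLike.mem_coe]
    constructor
    · rintro ⟨hw, hwp⟩
      rcases normal_form a hw with h | ⟨c, hc, g, rfl⟩
      · exact absurd h hwp
      · have hm : c * ofPerm g ∈ cl a := mul_ofPerm_mem_cl a ha hc g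
        exact ⟨rnk_le_of_mem_cl a hm, hm⟩
    · rintro ⟨hrnk, hmem⟩
      refine ⟨cl_le_big a hmem, ?_⟩
      intro hp
      have h1 : rnk w = n := by
        rcases hp with ⟨g, rfl⟩
        exact rnk_ofPerm g
      have h2 : rnk a < n := rnk_lt a ha
      omega
  refine ⟨hset, ?_⟩
  intro t ht g
  rw [hset] at ht ⊢
  obtain ⟨hrnk, hmem⟩ := ht
  exact ⟨by rw [rnk_conj]; exact hrnk, conj_mem_cl a hmem g⟩



/-- The non-invertible part of `⟨{a} ∪ S_n⟩` is exactly the set of transformations of rank at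
most `rank a` that are products of `S_n`-conjugates of `a`; in particular it is closed under
conjugation by `S_n`. -/
theorem stmt19 (n : ℕ) (a : Tn n) (ha : ¬ Function.Bijective a) :
    (↑(Subsemigroup.closure ({a} ∪ perms n)) : Set (Tn n)) \ perms n =
      {t : Tn n | rnk t ≤ rnk a ∧ t ∈ Subsemigroup.closure (conjClass a)} ∧
    ∀ t ∈ (↑(Subsemigroup.closure ({a} ∪ perms n)) : Set (Tn n)) \ perms n,
      ∀ g : Equiv.Perm (Fin n),
        ofPerm g⁻¹ * t * ofPerm g ∈
          (↑(Subsemigroup.closure ({a} ∪ perms n)) : Set (Tn n)) \ perms n := by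
  exact stmt19' n a ha
end
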